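/- Assume in addition that σ_n = T almost surely for every n ∈ ℕ, and that for some p ≥ 1 one has sup_{n ∈ ℕ} 𝔼[ sup_{t ∈ [0,T]} ‖X_n(t)‖^p ] < ∞. Then 𝔼[ sup_{t ∈ [0,T]} ‖X_∞(t)‖^p ] < ∞; in particular X_∞ ∈ L^p(Ω; C([0,T]; E)). -/

import Mathlib

open MeasureTheory Filter Set

open Topology

namespace Stmt9Aux

variable {E : Type*} [NormedAddCommGroup E]

/-- projection of a rational onto `[0, T]`. -/
noncomputable def proj (T : ℝ) (q : ℚ) : ℝ := max 0 (min (q : ℝ) T)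

lemma proj_mem {T : ℝ} (hT : 0 ≤ T) (q : ℚ) : proj T q ∈ Icc 0 T :=
  ⟨le_max_left _ _, max_le hT (min_le_right _ _)⟩

lemma bdd_of_continuousOn {T : ℝ} (f : ℝ → E) (hf : ContinuousOn f (Icc 0 T)) :
    BddAbove (Set.range fun t : Icc (0:ℝ) T => ‖f t‖) := by
  have h := (isCompact_Icc.image_of_continuousOn hf.norm).bddAbove
  rwa [Set.image_eq_range] at h

lemma sup_eq_rat {T : ℝ} (hT : 0 < T) (f : ℝ → E) (hf : ContinuousOn f (Icc 0 T)) :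
    (⨆ t : Icc (0:ℝ) T, ‖f t‖) = ⨆ q : ℚ, ‖f (proj T q)‖ := by
  haveI : Nonempty (Icc (0:ℝ) T) := ⟨⟨0, le_refl 0, hT.le⟩⟩
  have bdd1 := bdd_of_continuousOn f hf
  have bdd2 : BddAbove (Set.range fun q : ℚ => ‖f (proj T q)‖) := by
    obtain ⟨M, hM⟩ := bdd1
    refine ⟨M, ?_⟩
    rintro x ⟨q, rfl⟩
    exact hM ⟨⟨proj T q, proj_mem hT.le q⟩, rfl⟩
  apply le_antisymm
  · refine ciSup_le fun t => ?_
    have htc : (t : ℝ) ∈ closure (Set.range ((↑) : ℚ → ℝ)) := by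
      rw [Rat.denseRange_cast.closure_eq]; trivial
    obtain ⟨u, hu_mem, hu_t⟩ := mem_closure_iff_seq_limit.1 htc
    choose q hq using hu_mem
    have hprojcont : Continuous fun x : ℝ => max 0 (min x T) :=
      continuous_const.max (continuous_id.min continuous_const)
    have hproj_t : Tendsto (fun n => proj T (q n)) atTop (𝓝 (t : ℝ)) := by
      have h1 : Tendsto (fun n => max 0 (min (u n) T)) atTop (𝓝 (max 0 (min (t:ℝ) T))) :=
        (hprojcont.continuousAt (x := (t:ℝ))).tendsto.comp hu_t
      have h2 : max 0 (min (t:ℝ) T) = (t : ℝ) := by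
        rw [min_eq_left t.2.2, max_eq_right t.2.1]
      rw [h2] at h1
      refine h1.congr fun n => ?_
      rw [proj, hq n]
    have htend : Tendsto (fun n => ‖f (proj T (q n))‖) atTop (𝓝 ‖f (t:ℝ)‖) := by
      have hinside : Tendsto (fun n => proj T (q n)) atTop (𝓝[Icc (0:ℝ) T] (t:ℝ)) :=
        tendsto_nhdsWithin_iff.mpr ⟨hproj_t, Eventually.of_forall fun n => proj_mem hT.le (q n)⟩
      exact ((hf (t:ℝ) t.2).tendsto.comp hinside).norm
    exact le_of_tendsto htend (Eventually.of_forall fun n => le_ciSup bdd2 (q n))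
  · exact ciSup_le fun q => le_ciSup bdd1 ⟨proj T q, proj_mem hT.le q⟩

lemma not_bdd {T σ : ℝ} (hσ0 : 0 < σ) (hσT : σ ≤ T) (f : ℝ → E)
    (hf : ContinuousOn f (Ico 0 σ))
    (hex : ∀ M : ℝ, ∃ᶠ t in nhdsWithin σ (Iio σ), M < ‖f t‖) :
    (⨆ t : Icc (0:ℝ) T, ‖f t‖) = 0 ∧ (⨆ q : ℚ, ‖f (proj T q)‖) = 0 := by
  have key : ∀ M : ℝ, ∃ t, t ∈ Ioo 0 σ ∧ M < ‖f t‖ := by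
    intro M
    have hev : ∀ᶠ t in nhdsWithin σ (Iio σ), t ∈ Ioo 0 σ := by
      have h1 : ∀ᶠ t in nhdsWithin σ (Iio σ), t ∈ Iio σ := eventually_mem_nhdsWithin
      have h2 : ∀ᶠ t in nhdsWithin σ (Iio σ), (0:ℝ) < t :=
        eventually_nhdsWithin_of_eventually_nhds (eventually_gt_nhds hσ0)
      filter_upwards [h1, h2] with t ht1 ht2 using ⟨ht2, ht1⟩
    obtain ⟨t, ht1, ht2⟩ := ((hex M).and_eventually hev).exists
    exact ⟨t, ht2, ht1⟩
  constructor
  · apply Real.iSup_of_not_bddAbove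
    rintro ⟨M, hM⟩
    obtain ⟨t, ht, hMt⟩ := key M
    exact absurd (hM ⟨⟨t, ht.1.le, ht.2.le.trans hσT⟩, rfl⟩) (not_le.2 hMt)
  · apply Real.iSup_of_not_bddAbove
    rintro ⟨M, hM⟩
    obtain ⟨t, ht, hMt⟩ := key M
    have hct : ContinuousAt f t :=
      hf.continuousAt (mem_nhds_iff.2 ⟨Ioo 0 σ, fun x hx => ⟨hx.1.le, hx.2⟩, isOpen_Ioo, ht⟩)
    have hev : ∀ᶠ s in 𝓝 t, M < ‖f s‖ ∧ s ∈ Ioo 0 σ :=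
      (hct.norm.tendsto.eventually (eventually_gt_nhds hMt)).and (isOpen_Ioo.eventually_mem ht)
    obtain ⟨O, hOsub, hOopen, htO⟩ := mem_nhds_iff.1 hev
    obtain ⟨qq, hq⟩ := Rat.denseRange_cast.exists_mem_open hOopen ⟨t, htO⟩
    obtain ⟨hq1, hq2⟩ := hOsub hq
    have hprojq : proj T qq = (qq : ℝ) := by
      rw [proj, min_eq_left (hq2.2.le.trans hσT), max_eq_right hq2.1.le]
    have hle : ‖f (proj T qq)‖ ≤ M := hM ⟨qq, rfl⟩
    rw [hprojq] at hle
    exact absurd hle (not_le.2 hq1)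

lemma key_min {T r : ℝ} (hT : 0 < T) (f g : ℝ → E)
    (hf : ContinuousOn f (Icc 0 T)) (hg : Continuous g)
    (heq : ∀ t ∈ Icc 0 (sInf ({t : ℝ | t ∈ Ioo 0 T ∧ r < ‖f t‖} ∪ {T})), g t = f t) :
    min (⨆ t : Icc (0:ℝ) T, ‖f t‖) r ≤ (⨆ t : Icc (0:ℝ) T, ‖g t‖) ∧
    min (⨆ t : Icc (0:ℝ) T, ‖g t‖) r ≤ (⨆ t : Icc (0:ℝ) T, ‖f t‖) := by
  haveI : Nonempty (Icc (0:ℝ) T) := ⟨⟨0, le_refl 0, hT.le⟩⟩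
  have bddf := bdd_of_continuousOn f hf
  have bddg := bdd_of_continuousOn (T := T) g hg.continuousOn
  set S := {t : ℝ | t ∈ Ioo 0 T ∧ r < ‖f t‖} with hS
  rcases S.eq_empty_or_nonempty with hSe | hSne
  · rw [hSe, empty_union, csInf_singleton] at heq
    have hsup : (⨆ t : Icc (0:ℝ) T, ‖g t‖) = ⨆ t : Icc (0:ℝ) T, ‖f t‖ :=
      iSup_congr fun t => by rw [heq t t.2]
    rw [hsup]
    exact ⟨min_le_left _ _, min_le_left _ _⟩
  · have hbb : BddBelow S := ⟨0, fun t ht => ht.1.1.le⟩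
    obtain ⟨s0, hs0⟩ := hSne
    have hinf_le : sInf S ≤ T := le_trans (csInf_le hbb hs0) hs0.1.2.le
    have hunion : sInf (S ∪ {T}) = sInf S := by
      rw [csInf_union hbb ⟨s0, hs0⟩ bddBelow_singleton (singleton_nonempty T), csInf_singleton]
      exact inf_eq_left.2 hinf_le
    have hρ0 : 0 ≤ sInf S := le_csInf ⟨s0, hs0⟩ fun t ht => ht.1.1.le
    have hρmem : sInf S ∈ Icc (0:ℝ) T := ⟨hρ0, hinf_le⟩
    have hclos : sInf S ∈ closure S := csInf_mem_closure ⟨s0, hs0⟩ hbb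
    have hfρ : r ≤ ‖f (sInf S)‖ := by
      have hsub : S ⊆ Icc 0 T ∩ (fun t => ‖f t‖) ⁻¹' Ici r :=
        fun t ht => ⟨⟨ht.1.1.le, ht.1.2.le⟩, ht.2.le⟩
      have hcl : IsClosed (Icc 0 T ∩ (fun t => ‖f t‖) ⁻¹' Ici r) :=
        hf.norm.preimage_isClosed_of_isClosed isClosed_Icc isClosed_Ici
      exact ((closure_minimal hsub hcl) hclos).2
    have hgρ : g (sInf S) = f (sInf S) := heq (sInf S) (by rw [hunion]; exact ⟨hρ0, le_refl _⟩)
    constructor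
    · calc min (⨆ t : Icc (0:ℝ) T, ‖f t‖) r ≤ r := min_le_right _ _
        _ ≤ ‖g (sInf S)‖ := by rw [hgρ]; exact hfρ
        _ ≤ _ := le_ciSup bddg ⟨sInf S, hρmem⟩
    · calc min (⨆ t : Icc (0:ℝ) T, ‖g t‖) r ≤ r := min_le_right _ _
        _ ≤ ‖f (sInf S)‖ := hfρ
        _ ≤ _ := le_ciSup bddf ⟨sInf S, hρmem⟩

end Stmt9Aux


theorem stmt_9
    {Ω : Type*} [MeasurableSpace Ω] (P : Measure Ω) [IsProbabilityMeasure P]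
    {E : Type*} [NormedAddCommGroup E] [NormedSpace ℝ E] [CompleteSpace E]
    [MeasurableSpace E] [BorelSpace E]
    (T : ℝ) (hT : 0 < T)
    -- the explosion times σ_n (n ∈ ℕ) and σ_∞
    (σ : ℕ → Ω → ℝ) (σi : Ω → ℝ)
    (hσmeas : ∀ n, Measurable (σ n)) (hσimeas : Measurable σi)
    (hσmem : ∀ n ω, σ n ω ∈ Set.Ioc 0 T) (hσimem : ∀ ω, σi ω ∈ Set.Ioc 0 T)
    -- the processes X_n (n ∈ ℕ) and X_∞, jointly measurable
    (X : ℕ → ℝ → Ω → E) (Xi : ℝ → Ω → E)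
    (hXmeas : ∀ n, Measurable fun p : ℝ × Ω => X n p.1 p.2)
    (hXimeas : Measurable fun p : ℝ × Ω => Xi p.1 p.2)
    -- path continuity on [0, σ_n(ω)), and on [0,T] if σ_n(ω) = T
    (hXcont : ∀ n ω, ContinuousOn (fun t => X n t ω) (Set.Ico 0 (σ n ω)))
    (hXcontT : ∀ n ω, σ n ω = T → ContinuousOn (fun t => X n t ω) (Set.Icc 0 T))
    (hXicont : ∀ ω, ContinuousOn (fun t => Xi t ω) (Set.Ico 0 (σi ω)))
    (hXicontT : ∀ ω, σi ω = T → ContinuousOn (fun t => Xi t ω) (Set.Icc 0 T))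
    -- σ_n is an explosion time: on {σ_n < T}, limsup_{t ↑ σ_n} ‖X_n(t)‖ = ∞
    (hexpl : ∀ n ω, σ n ω < T →
      ∀ M : ℝ, ∃ᶠ t in nhdsWithin (σ n ω) (Set.Iio (σ n ω)), M < ‖X n t ω‖)
    (hexpli : ∀ ω, σi ω < T →
      ∀ M : ℝ, ∃ᶠ t in nhdsWithin (σi ω) (Set.Iio (σi ω)), M < ‖Xi t ω‖)
    -- the stopping times ρ_n^{(r)} = inf { t ∈ (0, σ_n) : ‖X_n(t)‖ > r }, inf ∅ := T
    (ρ : ℕ → ℝ → Ω → ℝ) (ρi : ℝ → Ω → ℝ)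
    (hρ : ∀ n r ω, ρ n r ω = sInf ({t : ℝ | t ∈ Set.Ioo 0 (σ n ω) ∧ r < ‖X n t ω‖} ∪ {T}))
    (hρi : ∀ r ω, ρi r ω = sInf ({t : ℝ | t ∈ Set.Ioo 0 (σi ω) ∧ r < ‖Xi t ω‖} ∪ {T}))
    -- the globally defined processes X_n^{(r)} (denoted Y n r) and X_∞^{(r)} (denoted Yi r)
    (Y : ℕ → ℝ → ℝ → Ω → E) (Yi : ℝ → ℝ → Ω → E)
    (hYmeas : ∀ n r, Measurable fun p : ℝ × Ω => Y n r p.1 p.2)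
    (hYimeas : ∀ r, Measurable fun p : ℝ × Ω => Yi r p.1 p.2)
    (hYcont : ∀ n r ω, Continuous fun t => Y n r t ω)
    (hYicont : ∀ r ω, Continuous fun t => Yi r t ω)
    -- assumption (a)
    (ha : ∀ n r, 0 < r → ∀ᵐ ω ∂P, ∀ t ∈ Set.Icc 0 (ρ n r ω), Y n r t ω = X n t ω)
    (hai : ∀ r, 0 < r → ∀ᵐ ω ∂P, ∀ t ∈ Set.Icc 0 (ρi r ω), Yi r t ω = Xi t ω)
    -- assumption (b): X_n^{(r)} → X_∞^{(r)} in L⁰(Ω; C([0,T]; E))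
    (hb : ∀ r, 0 < r → TendstoInMeasure P
      (fun n ω => ⨆ t : Set.Icc (0:ℝ) T, ‖Y n r (t : ℝ) ω - Yi r (t : ℝ) ω‖)
      atTop (fun _ => (0 : ℝ)))
    -- additionally: σ_n = T almost surely for all n ∈ ℕ
    (hσT : ∀ n, ∀ᵐ ω ∂P, σ n ω = T)
    -- and sup_n 𝔼[ sup_t ‖X_n(t)‖^p ] < ∞ for some p ≥ 1
    (p : ℝ) (hp : 1 ≤ p) (C : ENNReal) (hC : C < ⊤)
    (hbdd : ∀ n : ℕ,
      ∫⁻ ω, ENNReal.ofReal ((⨆ t : Set.Icc (0:ℝ) T, ‖X n (t : ℝ) ω‖) ^ p) ∂P ≤ C) :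
    ∫⁻ ω, ENNReal.ofReal ((⨆ t : Set.Icc (0:ℝ) T, ‖Xi (t : ℝ) ω‖) ^ p) ∂P < ⊤ := by
  haveI : Nonempty (Set.Icc (0:ℝ) T) := ⟨⟨0, le_refl 0, hT.le⟩⟩
  have hp0 : 0 ≤ p := zero_le_one.trans hp
  -- the pathwise sup of the limit process
  set Si : Ω → ℝ := fun ω => ⨆ t : Set.Icc (0:ℝ) T, ‖Xi (t : ℝ) ω‖ with hSidef
  have hSinonneg : ∀ ω, 0 ≤ Si ω := fun ω => Real.iSup_nonneg fun t => norm_nonneg _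
  -- Si equals a countable sup, hence is measurable
  have hSirat : ∀ ω, Si ω = ⨆ q : ℚ, ‖Xi (Stmt9Aux.proj T q) ω‖ := by
    intro ω
    rcases eq_or_lt_of_le (hσimem ω).2 with hσ | hσ
    · exact Stmt9Aux.sup_eq_rat hT (fun t => Xi t ω) (hXicontT ω hσ)
    · obtain ⟨h1, h2⟩ := Stmt9Aux.not_bdd (hσimem ω).1 (hσimem ω).2 (fun t => Xi t ω)
        (hXicont ω) (hexpli ω hσ)
      exact h1.trans h2.symm
  have hSimeas : Measurable Si := by
    have heq : Si = fun ω => ⨆ q : ℚ, ‖Xi (Stmt9Aux.proj T q) ω‖ := funext hSirat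
    rw [heq]
    exact Measurable.iSup fun q =>
      (hXimeas.comp (measurable_const.prodMk measurable_id)).norm
  -- the key quantitative estimate
  have key : ∀ r : ℝ, 0 < r → ∀ ε : ℝ, 0 < ε →
      ∫⁻ ω, ENNReal.ofReal ((max (min (Si ω) r - ε) 0) ^ p) ∂P ≤ C := by
    intro r hr ε hε
    obtain ⟨ns, hns, hae⟩ := (hb r hr).exists_seq_tendsto_ae
    have h1 : ∀ᵐ ω ∂P, ∀ k, σ (ns k) ω = T := ae_all_iff.2 fun k => hσT (ns k)
    have h2 : ∀ᵐ ω ∂P, ∀ k, ∀ t ∈ Set.Icc 0 (ρ (ns k) r ω), Y (ns k) r t ω = X (ns k) t ω :=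
      ae_all_iff.2 fun k => ha (ns k) r hr
    have h3 := hai r hr
    have hptwise : ∀ᵐ ω ∂P, ENNReal.ofReal ((max (min (Si ω) r - ε) 0) ^ p)
        ≤ liminf (fun k => ENNReal.ofReal
            ((⨆ t : Set.Icc (0:ℝ) T, ‖X (ns k) (t : ℝ) ω‖) ^ p)) atTop := by
      filter_upwards [hae, h1, h2, h3] with ω hD hσω hYX hYiXi
      set W : ℝ := ⨆ t : Set.Icc (0:ℝ) T, ‖Yi r (t : ℝ) ω‖ with hWdef
      -- step (i): min (Si ω) r ≤ W
      have hi : min (Si ω) r ≤ W := by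
        rcases eq_or_lt_of_le (hσimem ω).2 with hσ | hσ
        · refine (Stmt9Aux.key_min hT (fun t => Xi t ω) (fun t => Yi r t ω)
            (hXicontT ω hσ) (hYicont r ω) ?_).1
          intro t ht
          refine hYiXi t ?_
          rw [hρi r ω, hσ]
          exact ht
        · have h0 : Si ω = 0 := (Stmt9Aux.not_bdd (hσimem ω).1 (hσimem ω).2
            (fun t => Xi t ω) (hXicont ω) (hexpli ω hσ)).1
          rw [h0]
          exact le_trans (min_le_left _ _) (Real.iSup_nonneg fun t => norm_nonneg _)
      have hZnonneg : ∀ k, (0:ℝ) ≤ ⨆ t : Set.Icc (0:ℝ) T, ‖X (ns k) (t : ℝ) ω‖ :=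
        fun k => Real.iSup_nonneg fun t => norm_nonneg _
      have hkey : ∀ᶠ k in atTop,
          max (min (Si ω) r - ε) 0 ≤ ⨆ t : Set.Icc (0:ℝ) T, ‖X (ns k) (t : ℝ) ω‖ := by
        have hDlt : ∀ᶠ k in atTop,
            (⨆ t : Set.Icc (0:ℝ) T, ‖Y (ns k) r (t : ℝ) ω - Yi r (t : ℝ) ω‖) < ε :=
          hD.eventually (eventually_lt_nhds hε)
        filter_upwards [hDlt] with k hDk
        set Dk : ℝ := ⨆ t : Set.Icc (0:ℝ) T, ‖Y (ns k) r (t : ℝ) ω - Yi r (t : ℝ) ω‖ with hDkdef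
        set Vk : ℝ := ⨆ t : Set.Icc (0:ℝ) T, ‖Y (ns k) r (t : ℝ) ω‖ with hVkdef
        have hDk0 : 0 ≤ Dk := Real.iSup_nonneg fun t => norm_nonneg _
        have bddY := Stmt9Aux.bdd_of_continuousOn (T := T) (fun t => Y (ns k) r t ω)
          (hYcont (ns k) r ω).continuousOn
        have bddD := Stmt9Aux.bdd_of_continuousOn (T := T)
          (fun t => Y (ns k) r t ω - Yi r t ω)
          ((hYcont (ns k) r ω).sub (hYicont r ω)).continuousOn
        -- step (ii): W ≤ Vk + Dk
        have hWV : W ≤ Vk + Dk := by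
          refine ciSup_le fun t => ?_
          have htri : ‖Yi r (t : ℝ) ω‖ ≤ ‖Y (ns k) r (t : ℝ) ω‖
              + ‖Y (ns k) r (t : ℝ) ω - Yi r (t : ℝ) ω‖ := by
            have h := norm_sub_norm_le (Yi r (t : ℝ) ω) (Y (ns k) r (t : ℝ) ω)
            have h' : ‖Yi r (t : ℝ) ω - Y (ns k) r (t : ℝ) ω‖
                = ‖Y (ns k) r (t : ℝ) ω - Yi r (t : ℝ) ω‖ := norm_sub_rev _ _
            linarith
          exact le_trans htri (add_le_add (le_ciSup bddY t) (le_ciSup bddD t))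
        -- step (iii): min Vk r ≤ Z k
        have hiii : min Vk r ≤ ⨆ t : Set.Icc (0:ℝ) T, ‖X (ns k) (t : ℝ) ω‖ := by
          refine (Stmt9Aux.key_min hT (fun t => X (ns k) t ω) (fun t => Y (ns k) r t ω)
            (hXcontT (ns k) ω (hσω k)) (hYcont (ns k) r ω) ?_).2
          intro t ht
          refine hYX k t ?_
          rw [hρ (ns k) r ω, hσω k]
          exact ht
        -- combine
        have hmm : min (Vk + Dk) r ≤ min Vk r + Dk := by
          rcases le_total Vk r with h | h
          · calc min (Vk + Dk) r ≤ Vk + Dk := min_le_left _ _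
              _ = min Vk r + Dk := by rw [min_eq_left h]
          · calc min (Vk + Dk) r ≤ r := min_le_right _ _
              _ ≤ min Vk r + Dk := by rw [min_eq_right h]; linarith
        have hchain : min (Si ω) r - ε ≤ ⨆ t : Set.Icc (0:ℝ) T, ‖X (ns k) (t : ℝ) ω‖ := by
          have hc1 : min (Si ω) r ≤ min W r := le_min hi (min_le_right _ _)
          have hc2 : min W r ≤ min (Vk + Dk) r := min_le_min hWV (le_refl r)
          linarith [hc1, hc2, hmm, hiii, hDk]
        exact max_le hchain (hZnonneg k)
      refine Filter.le_liminf_of_le (by isBoundedDefault) ?_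
      filter_upwards [hkey] with k hk
      exact ENNReal.ofReal_le_ofReal (Real.rpow_le_rpow (le_max_right _ _) hk hp0)
    have haem : ∀ k : ℕ, AEMeasurable
        (fun ω => ENNReal.ofReal ((⨆ t : Set.Icc (0:ℝ) T, ‖X (ns k) (t : ℝ) ω‖) ^ p)) P := by
      intro k
      have hm : Measurable fun ω => ⨆ q : ℚ, ‖X (ns k) (Stmt9Aux.proj T q) ω‖ :=
        Measurable.iSup fun q =>
          ((hXmeas (ns k)).comp (measurable_const.prodMk measurable_id)).norm
      have haez : AEMeasurable (fun ω => ⨆ t : Set.Icc (0:ℝ) T, ‖X (ns k) (t : ℝ) ω‖) P := by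
        refine hm.aemeasurable.congr ?_
        filter_upwards [hσT (ns k)] with ω hω
        exact (Stmt9Aux.sup_eq_rat hT (fun t => X (ns k) t ω) (hXcontT (ns k) ω hω)).symm
      exact ((Real.continuous_rpow_const hp0).measurable.ennreal_ofReal).comp_aemeasurable haez
    calc ∫⁻ ω, ENNReal.ofReal ((max (min (Si ω) r - ε) 0) ^ p) ∂P
        ≤ ∫⁻ ω, liminf (fun k => ENNReal.ofReal
            ((⨆ t : Set.Icc (0:ℝ) T, ‖X (ns k) (t : ℝ) ω‖) ^ p)) atTop ∂P :=
          lintegral_mono_ae hptwise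
      _ ≤ liminf (fun k => ∫⁻ ω, ENNReal.ofReal
            ((⨆ t : Set.Icc (0:ℝ) T, ‖X (ns k) (t : ℝ) ω‖) ^ p) ∂P) atTop :=
          lintegral_liminf_le' haem
      _ ≤ liminf (fun _ : ℕ => C) atTop :=
          Filter.liminf_le_liminf (Eventually.of_forall fun k => hbdd (ns k))
      _ = C := liminf_const C
  -- monotone approximation
  set g : ℕ → Ω → ENNReal := fun j ω =>
    ENNReal.ofReal ((max (min (Si ω) ((j:ℝ)+1) - 1/((j:ℝ)+1)) 0) ^ p) with hgdef
  have hgmeas : ∀ j, Measurable (g j) := by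
    intro j
    exact ((Real.continuous_rpow_const hp0).measurable.ennreal_ofReal).comp
      (((hSimeas.min measurable_const).sub measurable_const).max measurable_const)
  have hgmono : Monotone g := by
    intro j k hjk ω
    have hjk' : ((j:ℝ)+1) ≤ ((k:ℝ)+1) := by
      have h := (Nat.cast_le (α := ℝ)).mpr hjk
      linarith
    refine ENNReal.ofReal_le_ofReal (Real.rpow_le_rpow (le_max_right _ _) ?_ hp0)
    refine max_le_max ?_ (le_refl 0)
    have hmin : min (Si ω) ((j:ℝ)+1) ≤ min (Si ω) ((k:ℝ)+1) := min_le_min (le_refl _) hjk'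
    have hdiv : 1/((k:ℝ)+1) ≤ 1/((j:ℝ)+1) := by
      apply one_div_le_one_div_of_le
      · positivity
      · exact hjk'
    linarith
  have hgle : ∀ ω, ENNReal.ofReal (Si ω ^ p) ≤ ⨆ j, g j ω := by
    intro ω
    have h1 : Tendsto (fun j : ℕ => min (Si ω) ((j:ℝ)+1)) atTop (𝓝 (Si ω)) := by
      refine tendsto_const_nhds.congr' ?_
      obtain ⟨J, hJ⟩ := exists_nat_ge (Si ω)
      filter_upwards [eventually_ge_atTop J] with j hj
      have hji : (J:ℝ) ≤ (j:ℝ) := Nat.cast_le.mpr hj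
      exact (min_eq_left (by linarith)).symm
    have h2 : Tendsto (fun j : ℕ => 1/((j:ℝ)+1)) atTop (𝓝 0) :=
      tendsto_one_div_add_atTop_nhds_zero_nat
    have h3 : Tendsto (fun j : ℕ => max (min (Si ω) ((j:ℝ)+1) - 1/((j:ℝ)+1)) 0) atTop
        (𝓝 (Si ω)) := by
      have h4 := h1.sub h2
      rw [sub_zero] at h4
      have h5 := h4.max (tendsto_const_nhds (x := (0:ℝ)))
      rw [max_eq_left (hSinonneg ω)] at h5
      exact h5
    have h6 : Tendsto (fun j : ℕ => g j ω) atTop (𝓝 (ENNReal.ofReal (Si ω ^ p))) := by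
      have hc : ContinuousAt (fun x : ℝ => ENNReal.ofReal (x ^ p)) (Si ω) :=
        ENNReal.continuous_ofReal.continuousAt.comp
          (Real.continuousAt_rpow_const (Si ω) p (Or.inr hp0))
      exact hc.tendsto.comp h3
    exact le_of_tendsto' h6 fun j => le_iSup (fun j => g j ω) j
  calc ∫⁻ ω, ENNReal.ofReal ((⨆ t : Set.Icc (0:ℝ) T, ‖Xi (t : ℝ) ω‖) ^ p) ∂P
      ≤ ∫⁻ ω, ⨆ j, g j ω ∂P := lintegral_mono hgle
    _ = ⨆ j, ∫⁻ ω, g j ω ∂P := lintegral_iSup hgmeas hgmono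
    _ ≤ C := iSup_le fun j => key ((j:ℝ)+1) (by positivity) (1/((j:ℝ)+1)) (by positivity)
    _ < ⊤ := hC
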